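/- A polynomial P over 𝔽_2 of degree n with nonzero constant term is regular (i.e., k-regular for all 1 ≤ k ≤ ⌊n/2⌋) if and only if it is irreducible and primitive. -/

import Mathlib

open Polynomial

/-- `f` is `k`-regular over `K`: no product of `k` roots of `f` (with distinct
indices, counting multiplicity) in an algebraic closure of `K` equals `1`. -/
def kRegular (K : Type*) [Field K] (f : Polynomial K) (k : ℕ) : Prop :=
  ∀ s : Multiset (AlgebraicClosure K),
    s ≤ (f.map (algebraMap K (AlgebraicClosure K))).roots →
    Multiset.card s = k → s.prod ≠ 1

namespace RegAux

local notation "AC" => AlgebraicClosure (ZMod 2)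

lemma root_sq {P : Polynomial (ZMod 2)} {y : AC}
    (h : (P.map (algebraMap (ZMod 2) AC)).IsRoot y) :
    (P.map (algebraMap (ZMod 2) AC)).IsRoot (y ^ 2) := by
  have hσ : (frobenius AC 2).comp (algebraMap (ZMod 2) AC) = algebraMap (ZMod 2) AC :=
    RingHom.ext_zmod _ _
  have h0 : eval₂ (algebraMap (ZMod 2) AC) y P = 0 := by
    rwa [IsRoot, eval_map] at h
  have h1 := Polynomial.hom_eval₂ P (algebraMap (ZMod 2) AC) (frobenius AC 2) y
  rw [h0, map_zero, hσ, frobenius_def] at h1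
  rw [IsRoot, eval_map]
  exact h1.symm

lemma root_pow {P : Polynomial (ZMod 2)} {x : AC}
    (h : (P.map (algebraMap (ZMod 2) AC)).IsRoot x) (i : ℕ) :
    (P.map (algebraMap (ZMod 2) AC)).IsRoot (x ^ 2 ^ i) := by
  induction i with
  | zero => simpa using h
  | succ i ih =>
    have h2 := root_sq ih
    rwa [← pow_mul, ← pow_succ] at h2

lemma pow2pow_inj (i : ℕ) : Function.Injective (fun y : AC => y ^ 2 ^ i) := by
  induction i with
  | zero => exact fun a b h => by simpa using h
  | succ i ih =>
    intro a b h
    simp only at h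
    have h2 : frobenius AC 2 (a ^ 2 ^ i) = frobenius AC 2 (b ^ 2 ^ i) := by
      simp only [frobenius_def]
      rw [← pow_mul, ← pow_mul, ← pow_succ]
      exact h
    exact ih ((frobenius AC 2).injective h2)

lemma sum_range_two_pow (n : ℕ) : ∑ i ∈ Finset.range n, 2 ^ i = 2 ^ n - 1 := by
  induction n with
  | zero => simp
  | succ n ih =>
    rw [Finset.sum_range_succ, ih]
    have h1 : 1 ≤ 2 ^ n := Nat.one_le_two_pow
    have h2 : 2 ^ (n + 1) = 2 ^ n * 2 := pow_succ 2 n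
    omega

lemma sum_testBit (n : ℕ) : ∀ e < 2 ^ n,
    ∑ i ∈ Finset.range n, (if e.testBit i then 2 ^ i else 0) = e := by
  induction n with
  | zero => intro e he; interval_cases e; simp
  | succ n ih =>
    intro e he
    rw [Finset.sum_range_succ']
    have hdiv : e / 2 < 2 ^ n := by
      have h2 : 2 ^ (n + 1) = 2 ^ n * 2 := pow_succ 2 n
      omega
    have h1 : ∀ i, (if e.testBit (i + 1) then 2 ^ (i + 1) else 0)
        = 2 * (if (e / 2).testBit i then 2 ^ i else 0) := by
      intro i
      rw [Nat.testBit_succ]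
      split <;> ring
    simp only [h1]
    rw [← Finset.mul_sum, ih _ hdiv]
    have h0 : (if e.testBit 0 then 2 ^ 0 else 0) = e % 2 := by
      rw [Nat.testBit_zero]
      rcases Nat.mod_two_eq_zero_or_one e with h | h <;> simp [h]
    rw [h0]
    omega


lemma conj_min {P : Polynomial (ZMod 2)} (hm : P.Monic) (hi : Irreducible P)
    {x : AC} (hx : Polynomial.aeval x P = 0) {d : ℕ} (hd : 0 < d)
    (hfix : x ^ 2 ^ d = x) : P.natDegree ≤ d := by
  classical
  set g : ℕ → Polynomial AC := fun i => X - C (x ^ 2 ^ i) with hg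
  set Q' : Polynomial AC := ∏ i ∈ Finset.range d, g i with hQ'
  have hgd : g d = g 0 := by
    simp only [hg]
    rw [hfix, pow_zero, pow_one]
  have h1 : Q'.map (frobenius AC 2) = ∏ i ∈ Finset.range d, g (i + 1) := by
    rw [hQ', Polynomial.map_prod]
    refine Finset.prod_congr rfl fun i _ => ?_
    simp only [hg]
    rw [Polynomial.map_sub, Polynomial.map_X, Polynomial.map_C, frobenius_def,
      ← pow_mul, ← pow_succ]
  have h2 : (∏ i ∈ Finset.range d, g (i + 1)) * g 0 = Q' * g 0 := by
    rw [← Finset.prod_range_succ', hQ', Finset.prod_range_succ, hgd]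
  have hmap : Q'.map (frobenius AC 2) = Q' := by
    rw [h1]
    exact mul_right_cancel₀ (by simp only [hg]; exact X_sub_C_ne_zero _) h2
  have hcoeff : ∀ k, Q'.coeff k ∈ Set.range (algebraMap (ZMod 2) AC) := by
    intro k
    have h := congrArg (fun q : Polynomial AC => q.coeff k) hmap
    simp only [Polynomial.coeff_map, frobenius_def] at h
    have h3 : Q'.coeff k * (Q'.coeff k - 1) = 0 := by
      rw [mul_sub, mul_one, ← sq, h, sub_self]
    rcases mul_eq_zero.mp h3 with h4 | h4
    · exact ⟨0, by simp [h4]⟩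
    · exact ⟨1, by simp [sub_eq_zero.mp h4]⟩
  have hQ'm : Q'.Monic := monic_prod_of_monic _ _ fun i _ => monic_X_sub_C _
  obtain ⟨Q, hQmap, hQdeg, hQmonic⟩ :=
    Polynomial.lifts_and_degree_eq_and_monic ((Polynomial.lifts_iff_coeff_lifts Q').mpr hcoeff) hQ'm
  have hdeg : Q'.natDegree = d := by
    rw [hQ', Polynomial.natDegree_prod _ _ fun i _ => by simp only [hg]; exact X_sub_C_ne_zero _,
      Finset.sum_congr rfl fun i _ => by simp only [hg]; exact natDegree_X_sub_C _]
    simp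
  have haQ : Polynomial.aeval x Q = 0 := by
    rw [Polynomial.aeval_def, ← Polynomial.eval_map, hQmap, hQ', Polynomial.eval_prod]
    refine Finset.prod_eq_zero (Finset.mem_range.mpr hd) ?_
    simp [hg]
  have h5 := minpoly.min (ZMod 2) x hQmonic haQ
  rw [← minpoly.eq_of_irreducible_of_monic hi hx hm] at h5
  have h6 : P.natDegree ≤ Q.natDegree := natDegree_le_natDegree h5
  have h7 : Q.natDegree = Q'.natDegree := natDegree_eq_of_degree_eq hQdeg
  omega
end RegAux


theorem regular_iff_irreducible_primitive_F2 (P : Polynomial (ZMod 2)) (n : ℕ)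
    (hn : P.natDegree = n) (h0 : 0 < n) (hc : P.coeff 0 ≠ 0) :
    (∀ k, 1 ≤ k → k ≤ n / 2 → kRegular (ZMod 2) P k) ↔
      (Irreducible P ∧ ∀ x : AlgebraicClosure (ZMod 2),
        (P.map (algebraMap (ZMod 2) (AlgebraicClosure (ZMod 2)))).IsRoot x →
        orderOf x = 2 ^ n - 1) := by
  classical
  have hone : ∀ a : ZMod 2, a ≠ 0 → a = 1 := by decide
  have hP0 : P ≠ 0 := fun h => hc (by simp [h])
  have hPmonic : P.Monic := hone _ (mt Polynomial.leadingCoeff_eq_zero.mp hP0)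
  set σ := algebraMap (ZMod 2) (AlgebraicClosure (ZMod 2)) with hσdef
  set Pm := P.map σ with hPmdef
  have hPm0 : Pm ≠ 0 := Polynomial.map_ne_zero hP0
  have hsplits : Splits Pm := IsAlgClosed.splits Pm
  have hcard : Multiset.card Pm.roots = n := by
    rw [splits_iff_card_roots.mp hsplits, hPmdef, natDegree_map, hn]
  constructor
  · intro hreg
    have key : ∀ u v : Polynomial (ZMod 2), P = u * v → 1 ≤ u.natDegree →
        2 * u.natDegree ≤ n → False := by
      intro u v hab h1 h2
      have hu0 : u ≠ 0 := fun h => hP0 (by rw [hab, h, zero_mul])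
      have humonic : u.Monic := hone _ (mt Polynomial.leadingCoeff_eq_zero.mp hu0)
      have huc : u.coeff 0 = 1 := by
        have h3 : u.coeff 0 * v.coeff 0 ≠ 0 := by
          rw [← Polynomial.mul_coeff_zero, ← hab]; exact hc
        exact hone _ (left_ne_zero_of_mul h3)
      have humsplits : Splits (u.map σ) := IsAlgClosed.splits _
      have humcard : Multiset.card (u.map σ).roots = u.natDegree := by
        rw [splits_iff_card_roots.mp humsplits, natDegree_map]
      have humprod : (u.map σ).roots.prod = 1 := by
        have h4 := humsplits.coeff_zero_eq_prod_roots_of_monic (humonic.map σ)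
        rw [Polynomial.coeff_map, huc, map_one, CharTwo.neg_eq, one_pow, one_mul] at h4
        exact h4.symm
      have hle : (u.map σ).roots ≤ Pm.roots :=
        Polynomial.roots.le_of_dvd hPm0 (Polynomial.map_dvd σ ⟨v, hab⟩)
      exact hreg u.natDegree h1 (show u.natDegree ≤ n / 2 by omega) (u.map σ).roots hle humcard humprod
    have hirr : Irreducible P := by
      rw [irreducible_iff]
      refine ⟨?_, ?_⟩
      · intro hu
        have h5 := Polynomial.isUnit_iff_degree_eq_zero.mp hu
        rw [Polynomial.degree_eq_natDegree hP0, hn] at h5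
        exact absurd (by exact_mod_cast h5 : n = 0) (by omega)
      · intro a b hab
        by_contra hcon
        push_neg at hcon
        obtain ⟨hua, hub⟩ := hcon
        have ha0 : a ≠ 0 := fun h => hP0 (by rw [hab, h, zero_mul])
        have hb0 : b ≠ 0 := fun h => hP0 (by rw [hab, h, mul_zero])
        have hnd : ∀ c : Polynomial (ZMod 2), c ≠ 0 → ¬ IsUnit c → 1 ≤ c.natDegree := by
          intro c hc0 hcu
          by_contra h'
          obtain ⟨w, hw⟩ := Polynomial.natDegree_eq_zero.mp (show c.natDegree = 0 by omega)
          have hw0 : w ≠ 0 := fun h => hc0 (by rw [← hw, h, map_zero])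
          exact hcu (by rw [← hw, hone w hw0]; exact isUnit_one)
        have hda := hnd a ha0 hua
        have hdb := hnd b hb0 hub
        have hsum : a.natDegree + b.natDegree = n := by
          rw [← Polynomial.natDegree_mul ha0 hb0, ← hab, hn]
        rcases le_total a.natDegree b.natDegree with h | h
        · exact key a b hab hda (by omega)
        · exact key b a (by rw [hab, mul_comm]) hdb (by omega)
    refine ⟨hirr, ?_⟩
    intro x hxroot
    have hax : Polynomial.aeval x P = 0 := by
      rwa [Polynomial.aeval_def, ← Polynomial.eval_map]
    have hx0 : x ≠ 0 := by
      intro h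
      rw [h] at hxroot
      have h5 : Pm.coeff 0 = 0 := by
        rw [Polynomial.coeff_zero_eq_eval_zero]; exact hxroot
      rw [hPmdef, Polynomial.coeff_map] at h5
      exact hc (by
        have := hone _ hc
        rw [this, map_one] at h5
        exact absurd h5 one_ne_zero)
    have hsep : Pm.Separable := (PerfectField.separable_of_irreducible hirr).map
    have hnodup : Pm.roots.Nodup := Polynomial.nodup_roots hsep
    have hfin : Pm.roots.toFinset.card = n := by
      rw [Multiset.toFinset_card_of_nodup hnodup, hcard]
    have hstep : ∀ i j : ℕ, i < j → x ^ 2 ^ i = x ^ 2 ^ j →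
        n ≤ j - i ∧ x ^ 2 ^ (j - i) = x := by
      intro i j hij heq
      have hfix : x ^ 2 ^ (j - i) = x := by
        apply RegAux.pow2pow_inj i
        simp only
        rw [← pow_mul, ← pow_add, Nat.sub_add_cancel hij.le]
        exact heq.symm
      have h6 := RegAux.conj_min hPmonic hirr hax (by omega) hfix
      exact ⟨by omega, hfix⟩
    have hfixn : x ^ 2 ^ n = x := by
      obtain ⟨i, hi, j, hj, hne, heq⟩ := Finset.exists_ne_map_eq_of_card_lt_of_maps_to
        (s := Finset.range (n + 1)) (t := Pm.roots.toFinset)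
        (by rw [hfin, Finset.card_range]; omega)
        (fun i _ => Multiset.mem_toFinset.mpr
          (Polynomial.mem_roots'.mpr ⟨hPm0, RegAux.root_pow hxroot i⟩))
      simp only [Finset.mem_range] at hi hj
      rcases Nat.lt_or_ge i j with h | h
      · obtain ⟨hnle, hfix⟩ := hstep i j h heq
        have h7 : j - i = n := by omega
        rwa [h7] at hfix
      · have hlt : j < i := by omega
        obtain ⟨hnle, hfix⟩ := hstep j i hlt heq.symm
        have h7 : i - j = n := by omega
        rwa [h7] at hfix
    have hpow1 : x ^ (2 ^ n - 1) = 1 := by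
      apply mul_left_cancel₀ hx0
      rw [mul_one, ← pow_succ' x (2 ^ n - 1)]
      have h2 : (2 ^ n - 1) + 1 = 2 ^ n := by
        have := Nat.one_le_two_pow (n := n); omega
      rw [h2, hfixn]
    have hedvd : orderOf x ∣ 2 ^ n - 1 := orderOf_dvd_of_pow_eq_one hpow1
    have h2n1 : 2 ≤ 2 ^ n := by
      calc 2 = 2 ^ 1 := rfl
      _ ≤ 2 ^ n := Nat.pow_le_pow_right (by norm_num) h0
    have hepos : 0 < orderOf x := by
      rcases Nat.eq_zero_or_pos (orderOf x) with h | h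
      · rw [h] at hedvd
        have := Nat.eq_zero_of_zero_dvd hedvd
        omega
      · exact h
    by_contra hne
    have helt : orderOf x < 2 ^ n - 1 :=
      lt_of_le_of_ne (Nat.le_of_dvd (by omega) hedvd) hne
    have hn2 : 2 ≤ n := by
      by_contra h'
      have hn1 : n = 1 := by omega
      rw [hn1] at helt
      simp only [pow_one] at helt
      omega
    set e := orderOf x with hedef
    set T := (Finset.range n).filter (fun i => e.testBit i) with hT
    have hTsub : T ⊆ Finset.range n := Finset.filter_subset _ _
    have hTsum : ∑ i ∈ T, 2 ^ i = e := by
      rw [hT, Finset.sum_filter]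
      exact RegAux.sum_testBit n e (by omega)
    set Tc := Finset.range n \ T with hTc
    have hTcsum : ∑ i ∈ Tc, 2 ^ i = (2 ^ n - 1) - e := by
      have h3 : ∑ i ∈ Finset.range n \ T, 2 ^ i + ∑ i ∈ T, 2 ^ i
          = ∑ i ∈ Finset.range n, 2 ^ i := Finset.sum_sdiff hTsub
      rw [RegAux.sum_range_two_pow, hTsum] at h3
      rw [hTc]
      omega
    have hcardsum : T.card + Tc.card = n := by
      have h4 := Finset.card_le_card hTsub
      rw [hTc, Finset.card_sdiff_of_subset hTsub, Finset.card_range]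
      rw [Finset.card_range] at h4
      omega
    have key2 : ∀ S : Finset ℕ, S ⊆ Finset.range n → 1 ≤ S.card → S.card ≤ n / 2 →
        e ∣ ∑ i ∈ S, 2 ^ i → False := by
      intro S hSsub hS1 hS2 hSdvd
      have hinj : ∀ i ∈ S.val, ∀ j ∈ S.val, x ^ 2 ^ i = x ^ 2 ^ j → i = j := by
        intro i hi j hj heq
        by_contra hne'
        have hi' := Finset.mem_range.mp (hSsub hi)
        have hj' := Finset.mem_range.mp (hSsub hj)
        rcases Nat.lt_or_ge i j with h | h
        · have := (hstep i j h heq).1; omega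
        · have := (hstep j i (by omega) heq.symm).1; omega
      have hnodups : (S.val.map (fun i => x ^ 2 ^ i)).Nodup :=
        Multiset.Nodup.map_on hinj S.nodup
      have hle : S.val.map (fun i => x ^ 2 ^ i) ≤ Pm.roots := by
        rw [Multiset.le_iff_subset hnodups]
        intro y hy
        obtain ⟨i, hiS, rfl⟩ := Multiset.mem_map.mp hy
        exact Polynomial.mem_roots'.mpr ⟨hPm0, RegAux.root_pow hxroot i⟩
      have hcards : Multiset.card (S.val.map (fun i => x ^ 2 ^ i)) = S.card := by
        rw [Multiset.card_map]; rfl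
      have hprod : (S.val.map (fun i => x ^ 2 ^ i)).prod = 1 := by
        rw [← Finset.prod_eq_multiset_prod, Finset.prod_pow_eq_pow_sum]
        exact orderOf_dvd_iff_pow_eq_one.mp hSdvd
      exact hreg S.card hS1 hS2 _ hle hcards hprod
    have hTne : 1 ≤ T.card := by
      by_contra h'
      have h5 : T = ∅ := Finset.card_eq_zero.mp (by omega)
      rw [h5] at hTsum
      simp at hTsum
      omega
    have hTcne : 1 ≤ Tc.card := by
      by_contra h'
      have h5 : Tc = ∅ := Finset.card_eq_zero.mp (by omega)
      rw [h5] at hTcsum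
      simp at hTcsum
      omega
    rcases le_or_gt T.card (n / 2) with h | h
    · exact key2 T hTsub hTne h (by rw [hTsum])
    · refine key2 Tc (by rw [hTc]; exact Finset.sdiff_subset) hTcne (by omega) ?_
      rw [hTcsum]
      exact Nat.dvd_sub hedvd dvd_rfl
  · rintro ⟨hirr, hprim⟩ k hk1 hk2 s hsle hscard hsprod
    have hn2 : 2 ≤ n := by omega
    have hsep : Pm.Separable := (PerfectField.separable_of_irreducible hirr).map
    have hnodup : Pm.roots.Nodup := Polynomial.nodup_roots hsep
    obtain ⟨x, hx⟩ : ∃ x, x ∈ Pm.roots :=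
      Multiset.exists_mem_of_ne_zero (by
        intro h
        rw [h] at hcard
        simp at hcard
        omega)
    have hxroot : Pm.IsRoot x := (Polynomial.mem_roots'.mp hx).2
    have horder : orderOf x = 2 ^ n - 1 := hprim x hxroot
    have h2n1 : 2 ≤ 2 ^ n := by
      calc 2 = 2 ^ 1 := rfl
      _ ≤ 2 ^ n := Nat.pow_le_pow_right (by norm_num) h0
    have hx0 : x ≠ 0 := by
      intro h
      have h1 : x ^ (2 ^ n - 1) = 1 := by
        rw [← horder]; exact pow_orderOf_eq_one x
      rw [h, zero_pow (by omega : 2 ^ n - 1 ≠ 0)] at h1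
      exact zero_ne_one h1
    have key3 : ∀ i j : ℕ, i < j → j < n → x ^ 2 ^ i = x ^ 2 ^ j → False := by
      intro i j hij hjn heq
      have hpowne : x ^ 2 ^ i ≠ 0 := pow_ne_zero _ hx0
      have h5 : x ^ 2 ^ i * x ^ (2 ^ j - 2 ^ i) = x ^ 2 ^ i * 1 := by
        rw [mul_one, ← pow_add]
        have h6 : 2 ^ i + (2 ^ j - 2 ^ i) = 2 ^ j := by
          have := Nat.pow_le_pow_right (by norm_num : 1 ≤ 2) hij.le
          omega
        rw [h6]; exact heq.symm
      have h7 : x ^ (2 ^ j - 2 ^ i) = 1 := mul_left_cancel₀ hpowne h5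
      have h8 : (2 ^ n - 1) ∣ (2 ^ j - 2 ^ i) := by
        rw [← horder]; exact orderOf_dvd_of_pow_eq_one h7
      have h9 : 2 ^ j ≤ 2 ^ (n - 1) := Nat.pow_le_pow_right (by norm_num) (by omega)
      have h10 : 2 ^ (n - 1) * 2 = 2 ^ n := by
        rw [← pow_succ]; congr 1; omega
      have h11 : 1 ≤ 2 ^ i := Nat.one_le_two_pow
      have h12 : 1 ≤ 2 ^ (n - 1) := Nat.one_le_two_pow
      have hlt2 : 2 ^ j - 2 ^ i < 2 ^ n - 1 := by omega
      have hpos : 0 < 2 ^ j - 2 ^ i := by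
        have := Nat.pow_lt_pow_right (by norm_num : 1 < 2) hij
        omega
      have := Nat.le_of_dvd hpos h8
      omega
    have hinj : ∀ i ∈ Finset.range n, ∀ j ∈ Finset.range n,
        x ^ 2 ^ i = x ^ 2 ^ j → i = j := by
      intro i hi j hj heq
      rw [Finset.mem_range] at hi hj
      by_contra hne'
      rcases Nat.lt_or_ge i j with h | h
      · exact key3 i j h hj heq
      · exact key3 j i (by omega) hi heq.symm
    have hinjOn : Set.InjOn (fun i => x ^ 2 ^ i) ↑(Finset.range n) :=
      fun a ha b hb h => hinj a (Finset.mem_coe.mp ha) b (Finset.mem_coe.mp hb) h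
    have himage : Pm.roots.toFinset = (Finset.range n).image (fun i => x ^ 2 ^ i) := by
      symm
      apply Finset.eq_of_subset_of_card_le
      · intro y hy
        obtain ⟨i, hi, rfl⟩ := Finset.mem_image.mp hy
        exact Multiset.mem_toFinset.mpr
          (Polynomial.mem_roots'.mpr ⟨hPm0, RegAux.root_pow hxroot i⟩)
      · rw [Finset.card_image_of_injOn hinjOn, Finset.card_range,
          Multiset.toFinset_card_of_nodup hnodup, hcard]
    have hsnodup : s.Nodup := Multiset.nodup_of_le hsle hnodup
    have hssub : s.toFinset ⊆ (Finset.range n).image (fun i => x ^ 2 ^ i) := by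
      rw [← himage]
      intro y hy
      exact Multiset.mem_toFinset.mpr (Multiset.mem_of_le hsle (Multiset.mem_toFinset.mp hy))
    obtain ⟨T, hTsub, hTim⟩ := Finset.subset_image_iff.mp hssub
    have hTinjOn : Set.InjOn (fun i => x ^ 2 ^ i) ↑T :=
      Set.InjOn.mono (by exact_mod_cast hTsub) hinjOn
    have hTcard : T.card = k := by
      have h1 : (T.image (fun i => x ^ 2 ^ i)).card = T.card :=
        Finset.card_image_of_injOn hTinjOn
      rw [hTim, Multiset.toFinset_card_of_nodup hsnodup, hscard] at h1
      omega
    have hprodT : x ^ (∑ i ∈ T, 2 ^ i) = 1 := by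
      have h1 : ∏ y ∈ s.toFinset, y = s.prod := by
        rw [Finset.prod_eq_multiset_prod, Multiset.map_id']
        congr 1
        exact Multiset.dedup_eq_self.mpr hsnodup
      rw [← hTim, Finset.prod_image (fun a ha b hb h => hTinjOn ha hb h),
        Finset.prod_pow_eq_pow_sum] at h1
      rw [h1, hsprod]
    have hsumpos : 0 < ∑ i ∈ T, 2 ^ i := by
      obtain ⟨i, hi⟩ := Finset.card_pos.mp (by omega : 0 < T.card)
      have h1 : 2 ^ i ≤ ∑ j ∈ T, 2 ^ j :=
        Finset.single_le_sum (fun _ _ => Nat.zero_le _) hi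
      have h2 : 1 ≤ 2 ^ i := Nat.one_le_two_pow
      omega
    have hsumlt : ∑ i ∈ T, 2 ^ i < 2 ^ n - 1 := by
      obtain ⟨j, hj, hjT⟩ : ∃ j ∈ Finset.range n, j ∉ T := by
        by_contra h'
        push_neg at h'
        have h1 := Finset.card_le_card h'
        rw [Finset.card_range] at h1
        omega
      have h2 := Finset.sum_lt_sum_of_subset (f := fun i => 2 ^ i) hTsub hj hjT (by simp)
        (fun _ _ _ => Nat.zero_le _)
      rwa [RegAux.sum_range_two_pow] at h2
    have hdvd : (2 ^ n - 1) ∣ ∑ i ∈ T, 2 ^ i := by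
      rw [← horder]
      exact orderOf_dvd_of_pow_eq_one hprodT
    have := Nat.le_of_dvd hsumpos hdvd
    omega
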